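/- arXiv:1911.10491 — 2 statements merged into one kernel-verified Lean document; each statement's English description precedes it below -/
import Mathlib

section
/- For any odd prime p, ∑_{k=0}^{p-1} ((-1)^k / 8^k) · ∑_{j=0}^{k} C(2j,j)·C(2k-2j,k-j)·(6j+1)·(6k-6j+1) ≡ 0 (mod p), i.e., the rational number given by this double sum has p-adic valuation at least 1. -/
open Finset

variable {K : Type*} [Field K] [CharZero K]

private noncomputable def cb (K : Type*) [Field K] (j : ℕ) : K := ((2 * j).choose j : K)

private lemma cb_rec (j : ℕ) :
    ((j : K) + 1) * cb K (j + 1) = (2 * (2 * (j : K) + 1)) * cb K j := by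
  have h := Nat.succ_mul_centralBinom_succ j
  simp only [Nat.centralBinom] at h
  have h2 := congrArg (Nat.cast : ℕ → K) h
  push_cast at h2
  simpa [cb] using h2

-- symmetry:  2 * ∑ j * c j * c (k-j)  =  k * ∑ c j * c (k-j)
private lemma sumC_symm (k : ℕ) :
    2 * ∑ j ∈ range (k+1), (j : K) * (cb K j * cb K (k - j))
      = (k : K) * ∑ j ∈ range (k+1), cb K j * cb K (k - j) := by
  have hrefl : ∑ j ∈ range (k+1), (j : K) * (cb K j * cb K (k - j))
      = ∑ j ∈ range (k+1), ((k - j : ℕ) : K) * (cb K (k - j) * cb K j) := by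
    rw [← Finset.sum_range_reflect (fun j => (j : K) * (cb K j * cb K (k - j))) (k+1)]
    apply Finset.sum_congr rfl
    intro j hj
    rw [Finset.mem_range] at hj
    have h1 : k + 1 - 1 - j = k - j := by omega
    have h2 : k - (k - j) = j := by omega
    rw [h1, h2]
  rw [two_mul]
  nth_rewrite 2 [hrefl]
  rw [← Finset.sum_add_distrib, Finset.mul_sum]
  apply Finset.sum_congr rfl
  intro j hj
  rw [Finset.mem_range] at hj
  have h3 : ((k - j : ℕ) : K) = (k : K) - (j : K) := by
    have : (j : K) + ((k - j : ℕ) : K) = (k : K) := by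
      rw [← Nat.cast_add]
      congr 1
      omega
    linear_combination this
  rw [h3]; ring

private lemma sumA (k : ℕ) :
    ∑ j ∈ range (k+1), cb K j * cb K (k - j) = 4 ^ k := by
  induction k with
  | zero => simp [cb]
  | succ k ih =>
    have hk1 : ((k : K) + 1) ≠ 0 := by
      have : ((k+1 : ℕ) : K) ≠ 0 := Nat.cast_ne_zero.mpr (by omega)
      push_cast at this; exact this
    have key : ((k : K) + 1) * ∑ j ∈ range (k+2), cb K j * cb K (k + 1 - j)
        = ((k : K) + 1) * 4 ^ (k+1) := by
      have hsplit : ((k : K) + 1) * ∑ j ∈ range (k+2), cb K j * cb K (k + 1 - j)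
          = 2 * ∑ j ∈ range (k+2), (j : K) * (cb K j * cb K (k + 1 - j)) := by
        have hc : ((k+1 : ℕ) : K) = (k : K) + 1 := by push_cast; ring
        have h := sumC_symm (K := K) (k+1)
        rw [hc] at h
        exact h.symm
      rw [hsplit]
      rw [Finset.sum_range_succ' (fun j => (j : K) * (cb K j * cb K (k + 1 - j))) (k+1)]
      simp only [Nat.cast_zero, zero_mul, add_zero, Nat.cast_add, Nat.cast_one]
      have hshift : ∀ i ∈ range (k+1),
          ((i : K) + 1) * (cb K (i+1) * cb K (k + 1 - (i+1)))
            = (2 * (2 * (i : K) + 1)) * (cb K i * cb K (k - i)) := by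
        intro i hi
        have h1 : k + 1 - (i + 1) = k - i := by omega
        rw [h1]
        have := cb_rec (K := K) i
        linear_combination cb K (k - i) * this
      rw [Finset.sum_congr rfl hshift]
      have hexp : ∑ i ∈ range (k+1), (2 * (2 * (i : K) + 1)) * (cb K i * cb K (k - i))
          = 4 * ∑ i ∈ range (k+1), (i : K) * (cb K i * cb K (k - i))
            + 2 * ∑ i ∈ range (k+1), cb K i * cb K (k - i) := by
        rw [Finset.mul_sum, Finset.mul_sum, ← Finset.sum_add_distrib]
        apply Finset.sum_congr rfl; intro i _; ring
      rw [hexp, ih]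
      have hs := sumC_symm (K := K) k
      rw [ih] at hs
      linear_combination 4 * hs
    exact mul_left_cancel₀ hk1 key

private lemma sumC_val (k : ℕ) :
    ∑ j ∈ range (k+1), (j : K) * (cb K j * cb K (k - j)) = (k : K) * 4 ^ k / 2 := by
  have hs := sumC_symm (K := K) k
  rw [sumA] at hs
  rw [eq_div_iff two_ne_zero]
  linear_combination hs

private lemma sumKm (k : ℕ) :
    ∑ j ∈ range (k+1), ((k - j : ℕ) : K) * (cb K j * cb K (k - j)) = (k : K) * 4 ^ k / 2 := by
  have h : ∀ j ∈ range (k+1), ((k - j : ℕ) : K) * (cb K j * cb K (k - j))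
      = (k : K) * (cb K j * cb K (k - j)) - (j : K) * (cb K j * cb K (k - j)) := by
    intro j hj
    rw [Finset.mem_range] at hj
    have h3 : ((k - j : ℕ) : K) = (k : K) - (j : K) := by
      have : (j : K) + ((k - j : ℕ) : K) = (k : K) := by
        rw [← Nat.cast_add]; congr 1; omega
      linear_combination this
    rw [h3]; ring
  rw [Finset.sum_congr rfl h, Finset.sum_sub_distrib, ← Finset.mul_sum, sumA, sumC_val]
  ring

private lemma sumB (k : ℕ) :
    ∑ j ∈ range (k+1), ((j : K) * ((k - j : ℕ) : K)) * (cb K j * cb K (k - j))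
      = (k : K) * ((k : K) - 1) * 4 ^ k / 8 := by
  induction k with
  | zero => simp
  | succ k ih =>
    rw [Finset.sum_range_succ'
      (fun j => ((j : K) * ((k + 1 - j : ℕ) : K)) * (cb K j * cb K (k + 1 - j))) (k+1)]
    simp only [Nat.cast_zero, zero_mul, add_zero]
    have hshift : ∀ i ∈ range (k+1),
        (((i + 1 : ℕ) : K) * ((k + 1 - (i + 1) : ℕ) : K)) * (cb K (i+1) * cb K (k + 1 - (i+1)))
          = (2 * (2 * (i : K) + 1)) * (((k - i : ℕ) : K) * (cb K i * cb K (k - i))) := by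
      intro i hi
      have h1 : k + 1 - (i + 1) = k - i := by omega
      rw [h1]
      have hrec := cb_rec (K := K) i
      push_cast
      linear_combination ((k - i : ℕ) : K) * cb K (k - i) * hrec
    rw [Finset.sum_congr rfl hshift]
    have hexp : ∑ i ∈ range (k+1), (2 * (2 * (i : K) + 1)) * (((k - i : ℕ) : K) * (cb K i * cb K (k - i)))
        = 4 * ∑ i ∈ range (k+1), ((i : K) * ((k - i : ℕ) : K)) * (cb K i * cb K (k - i))
          + 2 * ∑ i ∈ range (k+1), ((k - i : ℕ) : K) * (cb K i * cb K (k - i)) := by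
      rw [Finset.mul_sum, Finset.mul_sum, ← Finset.sum_add_distrib]
      apply Finset.sum_congr rfl; intro i _; ring
    rw [hexp, ih, sumKm]
    push_cast
    ring

private lemma innerSum (k : ℕ) :
    ∑ j ∈ range (k+1), cb K j * cb K (k - j) * ((6 * j + 1 : ℕ) : K) * ((6 * (k - j) + 1 : ℕ) : K)
      = 4 ^ k * (9 * (k : K) ^ 2 + 3 * (k : K) + 2) / 2 := by
  have h : ∀ j ∈ range (k+1),
      cb K j * cb K (k - j) * ((6 * j + 1 : ℕ) : K) * ((6 * (k - j) + 1 : ℕ) : K)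
        = 36 * (((j : K) * ((k - j : ℕ) : K)) * (cb K j * cb K (k - j)))
          + 6 * ((j : K) * (cb K j * cb K (k - j)))
          + 6 * (((k - j : ℕ) : K) * (cb K j * cb K (k - j)))
          + cb K j * cb K (k - j) := by
    intro j hj
    push_cast
    ring
  rw [Finset.sum_congr rfl h]
  simp only [Finset.sum_add_distrib, ← Finset.mul_sum]
  rw [sumA, sumC_val, sumKm, sumB]
  ring

private lemma tele (n : ℕ) :
    ∑ k ∈ range n, ((-1) ^ k / 8 ^ k : K) * (4 ^ k * (9 * (k : K) ^ 2 + 3 * (k : K) + 2) / 2)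
      = ((-1 : K) / 2) ^ n * ((n : K) - 3 * (n : K) ^ 2) := by
  induction n with
  | zero => simp
  | succ n ih =>
    rw [Finset.sum_range_succ, ih]
    have h8 : (8 : K) ^ n = 2 ^ n * 4 ^ n := by rw [← mul_pow]; norm_num
    have hd : ((-1 : K) / 2) ^ n = (-1) ^ n / 2 ^ n := div_pow _ _ _
    have h2n : (2 : K) ^ n ≠ 0 := pow_ne_zero _ (by norm_num)
    have h4n : (4 : K) ^ n ≠ 0 := pow_ne_zero _ (by norm_num)
    rw [h8, pow_succ ((-1 : K)/2) n, hd]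
    push_cast
    field_simp
    ring

theorem stmt2 (p : ℕ) [Fact p.Prime] (hodd : Odd p) :
    ‖∑ k ∈ range p, ((-1) ^ k / 8 ^ k : ℚ_[p]) *
        ∑ j ∈ range (k + 1),
          (((2 * j).choose j : ℚ_[p]) * ((2 * (k - j)).choose (k - j) : ℚ_[p]) *
            ((6 * j + 1 : ℕ) : ℚ_[p]) * ((6 * (k - j) + 1 : ℕ) : ℚ_[p]))‖
      ≤ (p : ℝ)⁻¹ := by
  have hp := (Fact.out : p.Prime)
  have h1 : ∀ k ∈ range p, ((-1) ^ k / 8 ^ k : ℚ_[p]) *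
        ∑ j ∈ range (k + 1),
          (((2 * j).choose j : ℚ_[p]) * ((2 * (k - j)).choose (k - j) : ℚ_[p]) *
            ((6 * j + 1 : ℕ) : ℚ_[p]) * ((6 * (k - j) + 1 : ℕ) : ℚ_[p]))
      = ((-1) ^ k / 8 ^ k : ℚ_[p]) * (4 ^ k * (9 * (k : ℚ_[p]) ^ 2 + 3 * (k : ℚ_[p]) + 2) / 2) := by
    intro k _
    congr 1
    have h := innerSum (K := ℚ_[p]) k
    simpa [cb] using h
  rw [Finset.sum_congr rfl h1, tele p]
  have heq : ((-1 : ℚ_[p]) / 2) ^ p * ((p : ℚ_[p]) - 3 * (p : ℚ_[p]) ^ 2)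
      = ((-1 : ℚ_[p]) / 2) ^ p * (p : ℚ_[p]) * ((1 : ℚ_[p]) - 3 * (p : ℚ_[p])) := by ring
  rw [heq]
  have h2norm : ‖(2 : ℚ_[p])‖ = 1 := by
    have hle := Padic.norm_int_le_one (p := p) 2
    have hndvd : ¬ ((p : ℤ) ∣ 2) := by
      intro h
      have h2 := Int.le_of_dvd (by norm_num) h
      have h3 : p ≠ 2 := by
        rintro rfl
        exact (Nat.not_odd_iff_even.mpr (by norm_num)) hodd
      have h4 := hp.two_le
      omega
    have hlt := (Padic.norm_intCast_lt_one_iff (p := p) (k := 2)).not.mpr hndvd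
    push_cast at hle hlt
    linarith [lt_or_eq_of_le hle]
  have hhalf : ‖((-1 : ℚ_[p]) / 2)‖ = 1 := by
    rw [norm_div, norm_neg, norm_one, h2norm]
    norm_num
  have hnp : ‖(p : ℚ_[p])‖ = (p : ℝ)⁻¹ := Padic.norm_p
  have hlast : ‖(1 : ℚ_[p]) - 3 * (p : ℚ_[p])‖ ≤ 1 := by
    have : ((1 - 3 * p : ℤ) : ℚ_[p]) = (1 : ℚ_[p]) - 3 * (p : ℚ_[p]) := by push_cast; ring
    rw [← this]
    exact Padic.norm_int_le_one _
  rw [norm_mul, norm_mul, norm_pow, hhalf, one_pow, one_mul, hnp]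
  calc (p : ℝ)⁻¹ * ‖(1 : ℚ_[p]) - 3 * (p : ℚ_[p])‖ ≤ (p : ℝ)⁻¹ * 1 := by
        apply mul_le_mul_of_nonneg_left hlast
        positivity
    _ = (p : ℝ)⁻¹ := by ring
end

section
/- For any odd prime p, ∑_{k=0}^{p-1} (1 / 4^k) · ∑_{j=0}^{k} C(2j,j)·C(2k-2j,k-j)·(6j+1)·(6k-6j+1) ≡ 0 (mod p). -/
open Finset

def aa (j : ℕ) : ℚ := ((2 * j).choose j : ℚ) / 4 ^ j

lemma aa_zero : aa 0 = 1 := by simp [aa]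

lemma choose_eq (j : ℕ) : ((2 * j).choose j : ℚ) = aa j * 4 ^ j := by
  unfold aa; field_simp

lemma arec (m : ℕ) : ((m : ℚ) + 1) * aa (m + 1) = ((m : ℚ) + 1 / 2) * aa m := by
  have h := Nat.succ_mul_centralBinom_succ m
  simp only [Nat.centralBinom] at h
  have h' : ((m : ℚ) + 1) * ((2 * (m + 1)).choose (m + 1) : ℚ)
      = 2 * (2 * m + 1) * ((2 * m).choose m : ℚ) := by exact_mod_cast h
  unfold aa
  have h4 : (4 : ℚ) ^ m ≠ 0 := by positivity
  field_simp
  ring_nf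
  ring_nf at h'
  linear_combination (2 * (4:ℚ) ^ m) * h'

def Sq (n : ℕ) : ℚ := ∑ j ∈ range (n + 1), aa j * aa (n - j)
def Uq (n : ℕ) : ℚ := ∑ j ∈ range (n + 1), (j : ℚ) * aa j * aa (n - j)
def Vq (n : ℕ) : ℚ := ∑ j ∈ range (n + 1), (j : ℚ) * ((n - j : ℕ) : ℚ) * aa j * aa (n - j)

lemma Uq_reflect (n : ℕ) :
    Uq n = ∑ j ∈ range (n + 1), ((n - j : ℕ) : ℚ) * aa j * aa (n - j) := by
  rw [Uq, ← Finset.sum_range_reflect (fun j => (j : ℚ) * aa j * aa (n - j)) (n + 1)]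
  refine Finset.sum_congr rfl (fun j hj => ?_)
  rw [mem_range, Nat.lt_succ_iff] at hj
  simp only [Nat.add_sub_cancel]
  rw [Nat.sub_sub_self hj]
  ring

lemma twoU (n : ℕ) : 2 * Uq n = n * Sq n := by
  rw [two_mul]
  nth_rewrite 2 [Uq_reflect n]
  rw [Uq, ← Finset.sum_add_distrib, Sq, Finset.mul_sum]
  refine Finset.sum_congr rfl (fun j hj => ?_)
  rw [mem_range, Nat.lt_succ_iff] at hj
  rw [Nat.cast_sub hj]
  ring

lemma shiftU (n : ℕ) : Uq (n + 1) = Uq n + (1 / 2) * Sq n := by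
  rw [Uq, Finset.sum_range_succ']
  simp only [Nat.cast_zero, zero_mul, add_zero, Nat.succ_sub_succ]
  have h : ∀ j ∈ range (n + 1),
      ((j + 1 : ℕ) : ℚ) * aa (j + 1) * aa (n - j)
        = (j : ℚ) * aa j * aa (n - j) + (1 / 2) * (aa j * aa (n - j)) := by
    intro j _
    push_cast
    linear_combination aa (n - j) * arec j
  rw [Finset.sum_congr rfl h, Finset.sum_add_distrib, ← Finset.mul_sum]
  rfl

lemma S_one : ∀ n, Sq n = 1 := by
  intro n
  induction n with
  | zero => simp [Sq, aa_zero]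
  | succ n ih =>
    have h1 : 2 * Uq (n + 1) = ((n : ℚ) + 1) * Sq (n + 1) := by
      have := twoU (n + 1); push_cast at this; linarith
    have h2 : 2 * Uq (n + 1) = ((n : ℚ) + 1) * 1 := by
      rw [shiftU n]; have := twoU n; rw [ih] at this ⊢; linarith
    have hne : ((n : ℚ) + 1) ≠ 0 := by positivity
    have := h1.symm.trans h2
    exact mul_left_cancel₀ hne this

lemma U_half (n : ℕ) : Uq n = n / 2 := by
  have := twoU n; rw [S_one n] at this; linarith

lemma shiftV (n : ℕ) : Vq (n + 2) = Vq n + ((n : ℚ) / 2 + 1 / 4) := by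
  rw [Vq, Finset.sum_range_succ]
  simp only [Nat.sub_self, Nat.cast_zero, mul_zero, zero_mul, mul_zero, add_zero]
  rw [Finset.sum_range_succ']
  simp only [Nat.cast_zero, zero_mul, add_zero, Nat.succ_sub_succ]
  have key : ∀ j ∈ range (n + 1),
      ((j + 1 : ℕ) : ℚ) * ((n + 1 - j : ℕ) : ℚ) * aa (j + 1) * aa (n + 1 - j)
        = (j : ℚ) * ((n - j : ℕ) : ℚ) * aa j * aa (n - j)
          + (1 / 2) * (((n - j : ℕ) : ℚ) * aa j * aa (n - j))
          + (1 / 2) * ((j : ℚ) * aa j * aa (n - j))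
          + (1 / 4) * (aa j * aa (n - j)) := by
    intro j hj
    rw [mem_range, Nat.lt_succ_iff] at hj
    have hs : n + 1 - j = (n - j) + 1 := by omega
    rw [hs]
    push_cast
    linear_combination (((n - j : ℕ) : ℚ) + 1) * aa ((n - j) + 1) * arec j
      + ((j : ℚ) + 1 / 2) * aa j * arec (n - j)
  rw [Finset.sum_congr rfl key]
  simp only [Finset.sum_add_distrib, ← Finset.mul_sum]
  rw [← Vq, ← Uq_reflect, ← Uq, ← Sq, U_half, S_one]
  ring

lemma V_eq (n : ℕ) : Vq n = (n : ℚ) * ((n : ℚ) - 1) / 8 := by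
  induction n using Nat.twoStepInduction with
  | zero => simp [Vq]
  | one =>
    rw [Vq]
    rw [show (1:ℕ)+1 = 2 from rfl, Finset.sum_range_succ, Finset.sum_range_one]
    norm_num
  | more n ih _ =>
    rw [shiftV n, ih]
    push_cast
    ring

lemma inner_eq (k : ℕ) :
    (∑ j ∈ range (k + 1),
        (((2 * j).choose j : ℚ) * ((2 * (k - j)).choose (k - j) : ℚ) *
          ((6 * j + 1 : ℕ) : ℚ) * ((6 * (k - j) + 1 : ℕ) : ℚ)))
      = 4 ^ k * ((9 * (k : ℚ) ^ 2 + 3 * k + 2) / 2) := by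
  have key : ∀ j ∈ range (k + 1),
      (((2 * j).choose j : ℚ) * ((2 * (k - j)).choose (k - j) : ℚ) *
          ((6 * j + 1 : ℕ) : ℚ) * ((6 * (k - j) + 1 : ℕ) : ℚ))
        = (4 : ℚ) ^ k * (36 * ((j : ℚ) * ((k - j : ℕ) : ℚ) * aa j * aa (k - j))
            + 6 * ((j : ℚ) * aa j * aa (k - j))
            + 6 * (((k - j : ℕ) : ℚ) * aa j * aa (k - j))
            + aa j * aa (k - j)) := by
    intro j hj
    rw [mem_range, Nat.lt_succ_iff] at hj
    rw [choose_eq j, choose_eq (k - j)]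
    have hpow : (4 : ℚ) ^ j * 4 ^ (k - j) = 4 ^ k := by
      rw [← pow_add, Nat.add_sub_cancel' hj]
    push_cast
    linear_combination (aa j * aa (k - j) * (6 * (j : ℚ) + 1) * (6 * ((k - j : ℕ) : ℚ) + 1)) * hpow
  rw [Finset.sum_congr rfl key, ← Finset.mul_sum]
  simp only [Finset.sum_add_distrib, ← Finset.mul_sum]
  rw [← Vq, ← Uq, ← Uq_reflect, ← Sq, V_eq, U_half, S_one]
  ring

lemma outer_eq (n : ℕ) :
    (∑ k ∈ range n, (1 / 4 ^ k : ℚ) *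
        ∑ j ∈ range (k + 1),
          (((2 * j).choose j : ℚ) * ((2 * (k - j)).choose (k - j) : ℚ) *
            ((6 * j + 1 : ℕ) : ℚ) * ((6 * (k - j) + 1 : ℕ) : ℚ)))
      = (n : ℚ) * (3 * (n : ℚ) ^ 2 - 3 * n + 2) / 2 := by
  induction n with
  | zero => simp
  | succ n ih =>
    rw [Finset.sum_range_succ, ih, inner_eq n]
    have h4 : (4 : ℚ) ^ n ≠ 0 := by positivity
    field_simp
    push_cast
    ring

theorem stmt3 (p : ℕ) [Fact p.Prime] (hodd : Odd p) :
    ‖∑ k ∈ range p, (1 / 4 ^ k : ℚ_[p]) *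
        ∑ j ∈ range (k + 1),
          (((2 * j).choose j : ℚ_[p]) * ((2 * (k - j)).choose (k - j) : ℚ_[p]) *
            ((6 * j + 1 : ℕ) : ℚ_[p]) * ((6 * (k - j) + 1 : ℕ) : ℚ_[p]))‖
      ≤ (p : ℝ)⁻¹ := by
  have h := outer_eq p
  have h2 : ((∑ k ∈ range p, (1 / 4 ^ k : ℚ) *
        ∑ j ∈ range (k + 1),
          (((2 * j).choose j : ℚ) * ((2 * (k - j)).choose (k - j) : ℚ) *
            ((6 * j + 1 : ℕ) : ℚ) * ((6 * (k - j) + 1 : ℕ) : ℚ)) : ℚ) : ℚ_[p])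
      = (((p : ℚ) * (3 * (p : ℚ) ^ 2 - 3 * p + 2) / 2 : ℚ) : ℚ_[p]) := by
    exact_mod_cast congrArg (fun x : ℚ => (x : ℚ_[p])) h
  push_cast at h2 ⊢
  rw [h2]
  have hrw : ((p : ℚ_[p]) * (3 * (p : ℚ_[p]) ^ 2 - 3 * p + 2) / 2)
      = (p : ℚ_[p]) * (((3 * (p : ℤ) ^ 2 - 3 * p + 2 : ℤ) : ℚ_[p]) * (2 : ℚ_[p])⁻¹) := by
    push_cast
    ring
  rw [hrw, norm_mul, norm_mul, Padic.norm_p]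
  have h1 : ‖((3 * (p : ℤ) ^ 2 - 3 * p + 2 : ℤ) : ℚ_[p])‖ ≤ 1 := Padic.norm_int_le_one _
  have hp2 : ¬ ((p : ℤ) ∣ 2) := by
    intro hd
    have hpd : p ∣ 2 := by exact_mod_cast hd
    have hp := (Fact.out : p.Prime)
    have : p = 2 := (Nat.prime_dvd_prime_iff_eq hp Nat.prime_two).mp hpd
    rw [this] at hodd
    exact absurd hodd (by decide)
  have h2' : ‖((2 : ℤ) : ℚ_[p])‖ = 1 := by
    refine le_antisymm (Padic.norm_int_le_one _) ?_
    by_contra hlt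
    push_neg at hlt
    exact hp2 ((Padic.norm_intCast_lt_one_iff (k := 2)).mp hlt)
  have h2'' : ‖(2 : ℚ_[p])⁻¹‖ = 1 := by
    rw [norm_inv]
    norm_num at h2'
    rw [h2']
    norm_num
  rw [h2'']
  have hpos : (0 : ℝ) ≤ (p : ℝ)⁻¹ := by positivity
  calc (p : ℝ)⁻¹ * (‖((3 * (p : ℤ) ^ 2 - 3 * p + 2 : ℤ) : ℚ_[p])‖ * 1)
      ≤ (p : ℝ)⁻¹ * (1 * 1) := by
        apply mul_le_mul_of_nonneg_left _ hpos
        apply mul_le_mul_of_nonneg_right h1 zero_le_one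
    _ = (p : ℝ)⁻¹ := by ring
end
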